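/- Fix an integer m ≥ 2. For coprime integers a, b with 1 ≤ a < b, let Λ(a/b) denote the maximum of |z| over the complex roots z of the digit polynomial D_{a/b}. Then the supremum of the set { Λ(a/b) : a, b coprime, 1 ≤ a < b } equals m + 1, and its infimum equals (m + 1 + √((m+1)² − 8))/2. -/

import Mathlib

open Polynomial

/-- The `i`-th digit-polynomial coefficient: `m` if there is an integer `k` with
`a*(i-1) ≤ k*b ≤ a*i`, and `m-2` otherwise. -/
noncomputable def digitCoeff (m : ℤ) (a b : ℕ) (i : ℕ) : ℤ :=
  open Classical in
  if ∃ k : ℤ, (a : ℤ) * ((i : ℤ) - 1) ≤ k * b ∧ k * b ≤ (a : ℤ) * i then m else m - 2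

/-- The digit polynomial `D_{a/b}(t) = t^(b+1) + 1 - ∑_{i=1}^{b} c_i t^(b+1-i)`. -/
noncomputable def digitPoly (m : ℤ) (a b : ℕ) : Polynomial ℤ :=
  X ^ (b + 1) + 1 - ∑ i ∈ Finset.Icc 1 b, C (digitCoeff m a b i) * X ^ (b + 1 - i)

namespace SF

lemma coeff_le (m : ℤ) (a b i : ℕ) : digitCoeff m a b i ≤ m := by
  unfold digitCoeff; split <;> omega

lemma le_coeff (m : ℤ) (a b i : ℕ) : m - 2 ≤ digitCoeff m a b i := by
  unfold digitCoeff; split <;> omega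

lemma coeff_one (m : ℤ) (a b : ℕ) : digitCoeff m a b 1 = m := by
  unfold digitCoeff
  rw [if_pos]
  exact ⟨0, by simp⟩

lemma coeff_b (m : ℤ) (a b : ℕ) (hab : a ≤ b) : digitCoeff m a b b = m := by
  unfold digitCoeff
  rw [if_pos]
  refine ⟨a, ?_, le_refl _⟩
  have : (0:ℤ) ≤ a := Int.natCast_nonneg a
  have : (a:ℤ) ≤ b := by exact_mod_cast hab
  nlinarith

lemma coeff_pred (m : ℤ) (b i : ℕ) (h1 : 1 ≤ i) (h2 : i ≤ b) :
    digitCoeff m (b-1) b i = m := by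
  unfold digitCoeff
  rw [if_pos]
  refine ⟨(i:ℤ) - 1, ?_, ?_⟩
  · have hb1 : ((b-1 : ℕ):ℤ) = (b:ℤ) - 1 := by
      have : 1 ≤ b := le_trans h1 h2
      push_cast [this]; ring
    rw [hb1]
    have : (1:ℤ) ≤ i := by exact_mod_cast h1
    nlinarith [Int.natCast_nonneg b]
  · have hb1 : ((b-1 : ℕ):ℤ) = (b:ℤ) - 1 := by
      have : 1 ≤ b := le_trans h1 h2
      push_cast [this]; ring
    rw [hb1]
    have h2' : (i:ℤ) ≤ b := by exact_mod_cast h2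
    have : (1:ℤ) ≤ i := by exact_mod_cast h1
    nlinarith

lemma coeff_one_mid (m : ℤ) (b i : ℕ) (h1 : 2 ≤ i) (h2 : i < b) :
    digitCoeff m 1 b i = m - 2 := by
  unfold digitCoeff
  rw [if_neg]
  rintro ⟨k, hk1, hk2⟩
  have hi1 : (2:ℤ) ≤ i := by exact_mod_cast h1
  have hi2 : (i:ℤ) < b := by exact_mod_cast h2
  push_cast at hk1 hk2
  have hbpos : (0:ℤ) < b := by exact_mod_cast (show 0 < b by omega)
  have hk : 1 ≤ k := by nlinarith
  nlinarith

lemma aeval_digitPolyR (m : ℤ) (a b : ℕ) (z : ℝ) :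
    aeval z (digitPoly m a b)
      = z ^ (b+1) + 1 - ∑ i ∈ Finset.Icc 1 b, (digitCoeff m a b i : ℝ) * z ^ (b + 1 - i) := by
  simp [digitPoly, map_sum]

lemma aeval_digitPolyC (m : ℤ) (a b : ℕ) (z : ℂ) :
    aeval z (digitPoly m a b)
      = z ^ (b+1) + 1 - ∑ i ∈ Finset.Icc 1 b, (digitCoeff m a b i : ℂ) * z ^ (b + 1 - i) := by
  simp [digitPoly, map_sum]

lemma sum_pow_reindex (b : ℕ) (x : ℝ) :
    ∑ i ∈ Finset.Icc 1 b, x ^ (b + 1 - i) = ∑ j ∈ Finset.Icc 1 b, x ^ j := by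
  refine Finset.sum_nbij' (fun i => b + 1 - i) (fun j => b + 1 - j) ?_ ?_ ?_ ?_ ?_
  all_goals intro i hi <;> simp [Finset.mem_Icc] at * <;> omega

lemma geom_identity' (b : ℕ) (x : ℝ) :
    (x - 1) * ∑ j ∈ Finset.Icc 1 b, x ^ j = x ^ (b+1) - x := by
  induction b with
  | zero => simp
  | succ n ih =>
    rw [show Finset.Icc 1 (n+1) = insert (n+1) (Finset.Icc 1 n) by
      ext j; simp [Finset.mem_Icc]; omega]
    rw [Finset.sum_insert (by simp)]
    have : (x-1) * (x^(n+1) + ∑ j ∈ Finset.Icc 1 n, x ^ j)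
        = (x-1) * x^(n+1) + ((x-1) * ∑ j ∈ Finset.Icc 1 n, x ^ j) := by ring
    rw [this, ih]; ring

lemma geom_identity (b : ℕ) (x : ℝ) :
    (x - 1) * ∑ i ∈ Finset.Icc 1 b, x ^ (b + 1 - i) = x ^ (b+1) - x := by
  rw [sum_pow_reindex, geom_identity']

/-- the minimal stretch factor -/
noncomputable def lam (m : ℤ) : ℝ := ((m:ℝ)+1+Real.sqrt (((m:ℝ)+1)^2-8))/2

lemma m_real (m : ℤ) (hm : 2 ≤ m) : (2:ℝ) ≤ (m:ℝ) := by exact_mod_cast hm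

lemma sqrt_ge_one (m : ℤ) (hm : 2 ≤ m) : 1 ≤ Real.sqrt (((m:ℝ)+1)^2-8) := by
  have h := m_real m hm
  have h1 : (1:ℝ) ≤ ((m:ℝ)+1)^2-8 := by nlinarith
  calc (1:ℝ) = Real.sqrt 1 := by simp
  _ ≤ Real.sqrt (((m:ℝ)+1)^2-8) := Real.sqrt_le_sqrt h1

lemma sqrt_lt (m : ℤ) (hm : 2 ≤ m) : Real.sqrt (((m:ℝ)+1)^2-8) < (m:ℝ)+1 := by
  have h := m_real m hm
  have : Real.sqrt (((m:ℝ)+1)^2-8) < Real.sqrt (((m:ℝ)+1)^2) := by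
    apply Real.sqrt_lt_sqrt (by nlinarith) (by nlinarith)
  calc Real.sqrt (((m:ℝ)+1)^2-8) < Real.sqrt (((m:ℝ)+1)^2) := this
  _ = (m:ℝ)+1 := Real.sqrt_sq (by nlinarith)

lemma lam_ge_two (m : ℤ) (hm : 2 ≤ m) : 2 ≤ lam m := by
  have h := m_real m hm
  have h2 := sqrt_ge_one m hm
  unfold lam; nlinarith

lemma lam_lt (m : ℤ) (hm : 2 ≤ m) : lam m < (m:ℝ)+1 := by
  have h2 := sqrt_lt m hm
  unfold lam; nlinarith

lemma lam_sq (m : ℤ) (hm : 2 ≤ m) : lam m ^ 2 = ((m:ℝ)+1) * lam m - 2 := by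
  have h := m_real m hm
  have h1 : (0:ℝ) ≤ ((m:ℝ)+1)^2-8 := by nlinarith
  have h2 : Real.sqrt (((m:ℝ)+1)^2-8) ^ 2 = ((m:ℝ)+1)^2-8 := Real.sq_sqrt h1
  unfold lam
  nlinarith [h2]

/-- upper bound on the coefficient sum -/
lemma sum_le_mG (m : ℤ) (a b : ℕ) (x : ℝ) (hx : 0 ≤ x) :
    ∑ i ∈ Finset.Icc 1 b, (digitCoeff m a b i : ℝ) * x ^ (b + 1 - i)
      ≤ (m:ℝ) * ∑ i ∈ Finset.Icc 1 b, x ^ (b + 1 - i) := by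
  rw [Finset.mul_sum]
  apply Finset.sum_le_sum
  intro i _
  apply mul_le_mul_of_nonneg_right _ (pow_nonneg hx _)
  exact_mod_cast coeff_le m a b i

/-- for x > m+1 the polynomial is positive -/
lemma pos_of_big (m : ℤ) (a b : ℕ) (hm : 2 ≤ m) (x : ℝ) (hx : (m:ℝ)+1 < x) :
    ∑ i ∈ Finset.Icc 1 b, (digitCoeff m a b i : ℝ) * x ^ (b + 1 - i) + 1 < x ^ (b+1) := by
  have hmr := m_real m hm
  have hx0 : (0:ℝ) ≤ x := by nlinarith
  have h1 := sum_le_mG m a b x hx0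
  have h2 := geom_identity b x
  have hx1 : (0:ℝ) < x - 1 := by nlinarith
  have hP : (0:ℝ) < x ^ (b+1) := pow_pos (by nlinarith) _
  set S := ∑ i ∈ Finset.Icc 1 b, (digitCoeff m a b i : ℝ) * x ^ (b + 1 - i) with hS
  set G := ∑ i ∈ Finset.Icc 1 b, x ^ (b + 1 - i) with hG
  nlinarith [mul_le_mul_of_nonneg_left h1 (le_of_lt hx1)]

/-- lower bound on the coefficient sum, any a/b -/
lemma lower_sum (m : ℤ) (a b : ℕ) (hm : 2 ≤ m) (h1 : 1 ≤ a) (hab : a < b)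
    (x : ℝ) (hx : 0 ≤ x) :
    ((m:ℝ)-2) * (∑ i ∈ Finset.Icc 1 b, x ^ (b + 1 - i)) + 2*x^b + 2*x
      ≤ ∑ i ∈ Finset.Icc 1 b, (digitCoeff m a b i : ℝ) * x ^ (b + 1 - i) := by
  have hb2 : 2 ≤ b := by omega
  have key : ∑ i ∈ ({1, b} : Finset ℕ), ((digitCoeff m a b i : ℝ) - ((m:ℝ)-2)) * x ^ (b + 1 - i)
      ≤ ∑ i ∈ Finset.Icc 1 b, ((digitCoeff m a b i : ℝ) - ((m:ℝ)-2)) * x ^ (b + 1 - i) := by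
    apply Finset.sum_le_sum_of_subset_of_nonneg
    · intro i hi
      simp only [Finset.mem_insert, Finset.mem_singleton] at hi
      rcases hi with h | h <;> simp [Finset.mem_Icc, h] <;> omega
    · intro i _ _
      have := le_coeff m a b i
      have : ((m:ℝ)-2) ≤ (digitCoeff m a b i : ℝ) := by exact_mod_cast this
      have := pow_nonneg hx (b + 1 - i)
      nlinarith
  have hne : (1:ℕ) ≠ b := by omega
  rw [Finset.sum_pair hne] at key
  rw [coeff_one, coeff_b m a b (le_of_lt hab)] at key
  have e1 : b + 1 - 1 = b := by omega
  have e2 : b + 1 - b = 1 := by omega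
  rw [e1, e2] at key
  have expand : ∑ i ∈ Finset.Icc 1 b, ((digitCoeff m a b i : ℝ) - ((m:ℝ)-2)) * x ^ (b + 1 - i)
      = (∑ i ∈ Finset.Icc 1 b, (digitCoeff m a b i : ℝ) * x ^ (b + 1 - i))
        - ((m:ℝ)-2) * ∑ i ∈ Finset.Icc 1 b, x ^ (b + 1 - i) := by
    rw [Finset.mul_sum, ← Finset.sum_sub_distrib]
    apply Finset.sum_congr rfl
    intro i _; ring
  rw [expand] at key
  nlinarith [key]

/-- the digit polynomial is negative at lam -/
lemma neg_at_lam (m : ℤ) (a b : ℕ) (hm : 2 ≤ m) (h1 : 1 ≤ a) (hab : a < b) :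
    (lam m) ^ (b+1) + 1
      - ∑ i ∈ Finset.Icc 1 b, (digitCoeff m a b i : ℝ) * (lam m) ^ (b + 1 - i) < 0 := by
  have hmr := m_real m hm
  set x := lam m with hxdef
  have hx2 : 2 ≤ x := lam_ge_two m hm
  have hx0 : (0:ℝ) ≤ x := by nlinarith
  have hq := lam_sq m hm
  rw [← hxdef] at hq
  have hL := lower_sum m a b hm h1 hab x hx0
  have hGid := geom_identity b x
  set S := ∑ i ∈ Finset.Icc 1 b, (digitCoeff m a b i : ℝ) * x ^ (b + 1 - i) with hS
  set G := ∑ i ∈ Finset.Icc 1 b, x ^ (b + 1 - i) with hG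
  have hx1 : (0:ℝ) < x - 1 := by nlinarith
  -- let P = x^b
  have hpow : x ^ (b+1) = x * x ^ b := by rw [pow_succ]; ring
  set P := x ^ b with hP
  have hPpos : (0:ℝ) < P := pow_pos (by nlinarith) _
  -- (x-1) * (x*P + 1 - ((m-2)G + 2P + 2x)) = 3 - (m+1)x < 0
  have hGval : (x - 1) * G = x * P - x := by rw [hGid, hpow]
  have key : (x-1) * (x*P + 1 - (((m:ℝ)-2) * G + 2*P + 2*x)) = 3 - ((m:ℝ)+1)*x := by
    have : (x-1) * (((m:ℝ)-2) * G) = ((m:ℝ)-2) * ((x-1)*G) := by ring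
    nlinarith [hGval, hq]
  have hneg : 3 - ((m:ℝ)+1)*x < 0 := by nlinarith
  rw [hpow]
  nlinarith [key, hL, hx1]

/-- upper bound for a = 1 -/
lemma upper_sum_one (m : ℤ) (b : ℕ) (hm : 2 ≤ m) (hb : 2 ≤ b) (x : ℝ) (hx : 0 ≤ x) :
    ∑ i ∈ Finset.Icc 1 b, (digitCoeff m 1 b i : ℝ) * x ^ (b + 1 - i)
      ≤ ((m:ℝ)-2) * (∑ i ∈ Finset.Icc 1 b, x ^ (b + 1 - i)) + 2*x^b + 2*x := by
  have key : ∑ i ∈ Finset.Icc 1 b, ((digitCoeff m 1 b i : ℝ) - ((m:ℝ)-2)) * x ^ (b + 1 - i)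
      = ∑ i ∈ ({1, b} : Finset ℕ), ((digitCoeff m 1 b i : ℝ) - ((m:ℝ)-2)) * x ^ (b + 1 - i) := by
    symm
    apply Finset.sum_subset
    · intro i hi
      simp only [Finset.mem_insert, Finset.mem_singleton] at hi
      rcases hi with h | h <;> simp [Finset.mem_Icc, h] <;> omega
    · intro i hi hni
      simp only [Finset.mem_insert, Finset.mem_singleton, not_or] at hni
      simp only [Finset.mem_Icc] at hi
      rw [coeff_one_mid m b i (by omega) (by omega)]
      push_cast
      ring
  have hne : (1:ℕ) ≠ b := by omega
  rw [Finset.sum_pair hne] at key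
  rw [coeff_one, coeff_b m 1 b (by omega)] at key
  have e1 : b + 1 - 1 = b := by omega
  have e2 : b + 1 - b = 1 := by omega
  rw [e1, e2] at key
  have expand : ∑ i ∈ Finset.Icc 1 b, ((digitCoeff m 1 b i : ℝ) - ((m:ℝ)-2)) * x ^ (b + 1 - i)
      = (∑ i ∈ Finset.Icc 1 b, (digitCoeff m 1 b i : ℝ) * x ^ (b + 1 - i))
        - ((m:ℝ)-2) * ∑ i ∈ Finset.Icc 1 b, x ^ (b + 1 - i) := by
    rw [Finset.mul_sum, ← Finset.sum_sub_distrib]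
    apply Finset.sum_congr rfl
    intro i _; ring
  rw [expand] at key
  nlinarith [key]

end SF

/-- `Λ(a/b)`: the maximum modulus of a complex root of the digit polynomial `D_{a/b}`. -/
noncomputable def maxRootModulus (m : ℤ) (a b : ℕ) : ℝ :=
  sSup {x : ℝ | ∃ z : ℂ, (Polynomial.aeval z) (digitPoly m a b) = 0 ∧ x = ‖z‖}

namespace SF

lemma root_abs_bound (m : ℤ) (a b : ℕ) (hm : 2 ≤ m) (z : ℂ)
    (hz : aeval z (digitPoly m a b) = 0) :
    ‖z‖ ^ (b+1)
      ≤ ∑ i ∈ Finset.Icc 1 b, (digitCoeff m a b i : ℝ) * ‖z‖ ^ (b + 1 - i) + 1 := by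
  rw [aeval_digitPolyC] at hz
  have heq : z ^ (b+1) = (∑ i ∈ Finset.Icc 1 b, (digitCoeff m a b i : ℂ) * z ^ (b + 1 - i)) - 1 := by
    linear_combination hz
  calc ‖z‖ ^ (b+1) = ‖z ^ (b+1)‖ := by rw [norm_pow]
    _ = ‖(∑ i ∈ Finset.Icc 1 b, (digitCoeff m a b i : ℂ) * z ^ (b + 1 - i)) - 1‖ := by
        rw [heq]
    _ ≤ ‖∑ i ∈ Finset.Icc 1 b, (digitCoeff m a b i : ℂ) * z ^ (b + 1 - i)‖
          + ‖(1:ℂ)‖ := by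
        apply norm_sub_le
    _ ≤ (∑ i ∈ Finset.Icc 1 b, ‖(digitCoeff m a b i : ℂ) * z ^ (b + 1 - i)‖) + 1 := by
        simp only [norm_one]
        gcongr
        exact norm_sum_le _ _
    _ = ∑ i ∈ Finset.Icc 1 b, (digitCoeff m a b i : ℝ) * ‖z‖ ^ (b + 1 - i) + 1 := by
        congr 1
        apply Finset.sum_congr rfl
        intro i _
        rw [norm_mul, norm_pow]
        congr 1
        rw [Complex.norm_intCast]
        have h0 : 0 ≤ digitCoeff m a b i := by have := le_coeff m a b i; omega
        have : (0:ℝ) ≤ (digitCoeff m a b i : ℝ) := by exact_mod_cast h0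
        exact abs_of_nonneg this

lemma root_le (m : ℤ) (a b : ℕ) (hm : 2 ≤ m) (z : ℂ)
    (hz : aeval z (digitPoly m a b) = 0) :
    ‖z‖ ≤ (m:ℝ) + 1 := by
  by_contra h
  push_neg at h
  have h1 := root_abs_bound m a b hm z hz
  have h2 := pos_of_big m a b hm (‖z‖) h
  linarith

lemma real_root_complex (m : ℤ) (a b : ℕ) (r : ℝ)
    (h : aeval r (digitPoly m a b) = 0) :
    aeval ((r : ℂ)) (digitPoly m a b) = 0 := by
  rw [aeval_digitPolyC]
  rw [aeval_digitPolyR] at h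
  have : ((r:ℂ) ^ (b+1) + 1 - ∑ i ∈ Finset.Icc 1 b, (digitCoeff m a b i : ℂ) * (r:ℂ) ^ (b + 1 - i))
      = ((r ^ (b+1) + 1 - ∑ i ∈ Finset.Icc 1 b, (digitCoeff m a b i : ℝ) * r ^ (b + 1 - i) : ℝ) : ℂ) := by
    push_cast
    ring
  rw [this, h, Complex.ofReal_zero]

lemma ivt_root (m : ℤ) (a b : ℕ) (hm : 2 ≤ m) (r0 : ℝ) (hr0 : r0 ≤ (m:ℝ)+2)
    (hneg : aeval r0 (digitPoly m a b) ≤ 0) :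
    ∃ r : ℝ, r0 ≤ r ∧ r ≤ (m:ℝ)+2 ∧ aeval r (digitPoly m a b) = 0 := by
  have hmr := m_real m hm
  have hpos : 0 ≤ aeval ((m:ℝ)+2) (digitPoly m a b) := by
    rw [aeval_digitPolyR]
    have := pos_of_big m a b hm ((m:ℝ)+2) (by linarith)
    linarith
  have hcont : ContinuousOn (fun x : ℝ => aeval x (digitPoly m a b)) (Set.Icc r0 ((m:ℝ)+2)) :=
    ((digitPoly m a b).continuous_aeval).continuousOn
  have := intermediate_value_Icc hr0 hcont
  have hmem : (0:ℝ) ∈ Set.Icc (aeval r0 (digitPoly m a b)) (aeval ((m:ℝ)+2) (digitPoly m a b)) :=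
    ⟨hneg, hpos⟩
  obtain ⟨r, hr, hr0'⟩ := this hmem
  exact ⟨r, hr.1, hr.2, hr0'⟩

lemma exists_root_lam (m : ℤ) (a b : ℕ) (hm : 2 ≤ m) (h1 : 1 ≤ a) (hab : a < b) :
    ∃ r : ℝ, lam m ≤ r ∧ r ≤ (m:ℝ)+2 ∧ aeval r (digitPoly m a b) = 0 := by
  have hmr := m_real m hm
  apply ivt_root m a b hm (lam m) (by have := lam_lt m hm; linarith)
  rw [aeval_digitPolyR]
  have := neg_at_lam m a b hm h1 hab
  linarith

lemma bddAbove_rootMods (m : ℤ) (a b : ℕ) (hm : 2 ≤ m) :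
    BddAbove {x : ℝ | ∃ z : ℂ, (Polynomial.aeval z) (digitPoly m a b) = 0 ∧ x = ‖z‖} := by
  refine ⟨(m:ℝ)+1, ?_⟩
  rintro x ⟨z, hz, rfl⟩
  exact root_le m a b hm z hz

lemma mem_rootMods_of_real_root (m : ℤ) (a b : ℕ) (r : ℝ) (hr : 0 ≤ r)
    (h : aeval r (digitPoly m a b) = 0) :
    r ∈ {x : ℝ | ∃ z : ℂ, (Polynomial.aeval z) (digitPoly m a b) = 0 ∧ x = ‖z‖} := by
  refine ⟨(r:ℂ), real_root_complex m a b r h, ?_⟩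
  rw [Complex.norm_real, Real.norm_eq_abs, abs_of_nonneg hr]

lemma maxRootModulus_ge_lam (m : ℤ) (a b : ℕ) (hm : 2 ≤ m) (h1 : 1 ≤ a) (hab : a < b) :
    lam m ≤ maxRootModulus m a b := by
  obtain ⟨r, hr1, _, hr3⟩ := exists_root_lam m a b hm h1 hab
  have hr0 : 0 ≤ r := le_trans (by have := lam_ge_two m hm; linarith) hr1
  have hmem := mem_rootMods_of_real_root m a b r hr0 hr3
  exact le_trans hr1 (le_csSup (bddAbove_rootMods m a b hm) hmem)

lemma maxRootModulus_le (m : ℤ) (a b : ℕ) (hm : 2 ≤ m) (h1 : 1 ≤ a) (hab : a < b) :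
    maxRootModulus m a b ≤ (m:ℝ) + 1 := by
  apply csSup_le
  · obtain ⟨r, hr1, _, hr3⟩ := exists_root_lam m a b hm h1 hab
    have hr0 : 0 ≤ r := le_trans (by have := lam_ge_two m hm; linarith) hr1
    exact ⟨r, mem_rootMods_of_real_root m a b r hr0 hr3⟩
  · rintro x ⟨z, hz, rfl⟩
    exact root_le m a b hm z hz

end SF

namespace SF

lemma neg_pred (m : ℤ) (b : ℕ) (hm : 2 ≤ m) (hb : 2 ≤ b) (r : ℝ) (hr2 : 2 ≤ r)
    (hrm : r < (m:ℝ)+1) (hbig : r - 1 + (m:ℝ)*r < 2^b * ((m:ℝ)+1-r)) :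
    aeval r (digitPoly m (b-1) b) < 0 := by
  have hmr := m_real m hm
  rw [aeval_digitPolyR]
  have hsum : ∑ i ∈ Finset.Icc 1 b, (digitCoeff m (b-1) b i : ℝ) * r ^ (b + 1 - i)
      = (m:ℝ) * ∑ i ∈ Finset.Icc 1 b, r ^ (b + 1 - i) := by
    rw [Finset.mul_sum]
    apply Finset.sum_congr rfl
    intro i hi
    simp only [Finset.mem_Icc] at hi
    rw [coeff_pred m b i hi.1 hi.2]
  rw [hsum]
  have hGid := geom_identity b r
  set G := ∑ i ∈ Finset.Icc 1 b, r ^ (b + 1 - i) with hG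
  have hr1 : (0:ℝ) < r - 1 := by linarith
  have hpow1 : (2:ℝ)^b ≤ r^b := pow_le_pow_left₀ (by norm_num) hr2 b
  have hpow2 : r^b ≤ r^(b+1) := by
    rw [pow_succ]
    nlinarith [pow_pos (show (0:ℝ) < r by linarith) b]
  have hkey : r - 1 + (m:ℝ)*r < r^(b+1) * ((m:ℝ)+1-r) := by
    calc r - 1 + (m:ℝ)*r < 2^b * ((m:ℝ)+1-r) := hbig
    _ ≤ r^(b+1) * ((m:ℝ)+1-r) := by
        apply mul_le_mul_of_nonneg_right (le_trans hpow1 hpow2) (by linarith)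
  nlinarith [hkey, hGid, hr1]

lemma sup_reach (m : ℤ) (hm : 2 ≤ m) (w : ℝ) (hw : w < (m:ℝ)+1) :
    ∃ a b : ℕ, 1 ≤ a ∧ a < b ∧ Nat.Coprime a b ∧ w < maxRootModulus m a b := by
  have hmr := m_real m hm
  set r := max ((w + ((m:ℝ)+1))/2) 2 with hrdef
  have hr2 : (2:ℝ) ≤ r := le_max_right _ _
  have hrw : w < r := by
    have h1 : (w + ((m:ℝ)+1))/2 ≤ r := le_max_left _ _
    rcases le_or_gt w 1 with h | h
    · linarith
    · linarith
  have hrm : r < (m:ℝ)+1 := by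
    apply max_lt <;> linarith
  obtain ⟨b0, hb0⟩ := pow_unbounded_of_one_lt
    ((r - 1 + (m:ℝ)*r)/((m:ℝ)+1-r)) (by norm_num : (1:ℝ) < 2)
  set b := max b0 2 with hbdef
  have hb2 : 2 ≤ b := le_max_right _ _
  have h2b : (2:ℝ)^b0 ≤ 2^b := pow_le_pow_right₀ (by norm_num) (le_max_left _ _)
  have hbig : r - 1 + (m:ℝ)*r < 2^b * ((m:ℝ)+1-r) := by
    have hpos : (0:ℝ) < (m:ℝ)+1-r := by linarith
    rw [div_lt_iff₀ hpos] at hb0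
    calc r - 1 + (m:ℝ)*r < 2^b0 * ((m:ℝ)+1-r) := hb0
    _ ≤ 2^b * ((m:ℝ)+1-r) := mul_le_mul_of_nonneg_right h2b (le_of_lt hpos)
  have hco : Nat.Coprime (b-1) b := by
    have hb' : b - 1 + 1 = b := by omega
    rw [← hb']
    simp [Nat.Coprime, Nat.add_comm, Nat.gcd_add_self_left]
  have hneg := neg_pred m b hm hb2 r hr2 hrm hbig
  obtain ⟨r', hr'1, hr'2, hr'3⟩ := ivt_root m (b-1) b hm r (by linarith) (le_of_lt hneg)
  have hr'0 : (0:ℝ) ≤ r' := by linarith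
  have hmem := mem_rootMods_of_real_root m (b-1) b r' hr'0 hr'3
  have hle := le_csSup (bddAbove_rootMods m (b-1) b hm) hmem
  exact ⟨b-1, b, by omega, by omega, hco, by
    unfold maxRootModulus
    linarith⟩

lemma two_lam (m : ℤ) : 2 * lam m = ((m:ℝ)+1) + Real.sqrt (((m:ℝ)+1)^2-8) := by
  unfold lam; ring

lemma one_b_bound (m : ℤ) (b : ℕ) (hm : 2 ≤ m) (hb : 2 ≤ b) (ε : ℝ) (hε : 0 < ε)
    (hbig : 2*((m:ℝ)+1)^2 < 2^b * ε) (r : ℝ) (hr1 : lam m + ε ≤ r) (hr2 : r ≤ (m:ℝ)+1) :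
    ∑ i ∈ Finset.Icc 1 b, (digitCoeff m 1 b i : ℝ) * r ^ (b + 1 - i) + 1 < r ^ (b+1) := by
  have hmr := m_real m hm
  have hlam2 := lam_ge_two m hm
  have hr2' : (2:ℝ) ≤ r := by linarith
  have hr0 : (0:ℝ) ≤ r := by linarith
  have hS := upper_sum_one m b hm hb r hr0
  have hGid := geom_identity b r
  set S := ∑ i ∈ Finset.Icc 1 b, (digitCoeff m 1 b i : ℝ) * r ^ (b + 1 - i) with hSdef
  set G := ∑ i ∈ Finset.Icc 1 b, r ^ (b + 1 - i) with hGdef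
  set P := r ^ b with hPdef
  have hpow : r ^ (b+1) = r * P := by rw [pow_succ]; ring
  have hq : ε ≤ r^2 - ((m:ℝ)+1)*r + 2 := by
    have h1 : ε ≤ r - lam m := by linarith
    have h2 : (1:ℝ) ≤ r + lam m - ((m:ℝ)+1) := by
      have := two_lam m
      have := sqrt_ge_one m hm
      linarith
    have h3 : ε * 1 ≤ (r - lam m) * (r + lam m - ((m:ℝ)+1)) :=
      mul_le_mul h1 h2 zero_le_one (by linarith)
    have h4 := lam_sq m hm
    nlinarith [h3, h4]
  have hP2 : (2:ℝ)^b ≤ P := pow_le_pow_left₀ (by norm_num) hr2' b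
  have hPq : 2^b * ε ≤ P * (r^2 - ((m:ℝ)+1)*r + 2) :=
    mul_le_mul hP2 hq (le_of_lt hε) (by positivity)
  have hr1' : (0:ℝ) < r - 1 := by linarith
  -- (r-1)(S+1) ≤ (m-2)(rP - r) + (r-1)(2P + 2r + 1) < (r-1) r P
  have hkey : P * (r^2 - ((m:ℝ)+1)*r + 2) > 2*r^2 - ((m:ℝ)-1)*r - 1 := by
    nlinarith [hPq, hbig, hr2, hr2', hmr]
  rw [hpow]
  nlinarith [hS, hGid, hr1', hkey]

lemma inf_reach (m : ℤ) (hm : 2 ≤ m) (w : ℝ) (hw : lam m < w) :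
    ∃ a b : ℕ, 1 ≤ a ∧ a < b ∧ Nat.Coprime a b ∧ maxRootModulus m a b < w := by
  have hmr := m_real m hm
  set ε := (w - lam m)/2 with hεdef
  have hε : 0 < ε := by simp [hεdef]; linarith
  obtain ⟨b0, hb0⟩ := pow_unbounded_of_one_lt (2*((m:ℝ)+1)^2/ε) (by norm_num : (1:ℝ) < 2)
  set b := max b0 2 with hbdef
  have hb2 : 2 ≤ b := le_max_right _ _
  have h2b : (2:ℝ)^b0 ≤ 2^b := pow_le_pow_right₀ (by norm_num) (le_max_left _ _)
  have hbig : 2*((m:ℝ)+1)^2 < 2^b * ε := by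
    rw [div_lt_iff₀ hε] at hb0
    calc 2*((m:ℝ)+1)^2 < 2^b0 * ε := hb0
    _ ≤ 2^b * ε := mul_le_mul_of_nonneg_right h2b (le_of_lt hε)
  have hub : maxRootModulus m 1 b ≤ lam m + ε := by
    apply csSup_le
    · obtain ⟨r, hra, _, hrc⟩ := exists_root_lam m 1 b hm (le_refl 1) (by omega)
      have hr0 : 0 ≤ r := le_trans (by have := lam_ge_two m hm; linarith) hra
      exact ⟨r, mem_rootMods_of_real_root m 1 b r hr0 hrc⟩
    · rintro x ⟨z, hz, rfl⟩
      by_contra hcon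
      push_neg at hcon
      have hle := root_le m 1 b hm z hz
      have h1 := one_b_bound m b hm hb2 ε hε hbig (‖z‖) (le_of_lt hcon) hle
      have h2 := root_abs_bound m 1 b hm z hz
      linarith
  refine ⟨1, b, le_refl 1, by omega, Nat.coprime_one_left b, ?_⟩
  calc maxRootModulus m 1 b ≤ lam m + ε := hub
  _ < w := by simp [hεdef]; linarith

end SF

/-- Best possible bounds on the stretch factors in `PA(m)`: the supremum of the
maximal root moduli of the digit polynomials `D_{a/b}` over all coprime fractions
`a/b ∈ (0,1)` is `m + 1`, and their infimum is `(m + 1 + √((m+1)² - 8))/2`. -/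
theorem stretch_factor_sup_inf (m : ℤ) (hm : 2 ≤ m) :
    sSup {x : ℝ | ∃ a b : ℕ, 1 ≤ a ∧ a < b ∧ Nat.Coprime a b ∧ x = maxRootModulus m a b}
        = (m : ℝ) + 1 ∧
      sInf {x : ℝ | ∃ a b : ℕ, 1 ≤ a ∧ a < b ∧ Nat.Coprime a b ∧ x = maxRootModulus m a b}
        = ((m : ℝ) + 1 + Real.sqrt (((m : ℝ) + 1) ^ 2 - 8)) / 2 := by

  have hmr := SF.m_real m hm
  have hne : ({x : ℝ | ∃ a b : ℕ, 1 ≤ a ∧ a < b ∧ Nat.Coprime a b ∧ x = maxRootModulus m a b}).Nonempty :=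
    ⟨maxRootModulus m 1 2, 1, 2, le_refl 1, by omega, Nat.coprime_one_left 2, rfl⟩
  constructor
  · apply csSup_eq_of_forall_le_of_forall_lt_exists_gt hne
    · rintro x ⟨a, b, h1, hab, _, rfl⟩
      exact SF.maxRootModulus_le m a b hm h1 hab
    · intro w hw
      obtain ⟨a, b, h1, hab, hco, hgt⟩ := SF.sup_reach m hm w hw
      exact ⟨maxRootModulus m a b, ⟨a, b, h1, hab, hco, rfl⟩, hgt⟩
  · have hlam : SF.lam m = ((m : ℝ) + 1 + Real.sqrt (((m : ℝ) + 1) ^ 2 - 8)) / 2 := rfl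
    rw [← hlam]
    apply csInf_eq_of_forall_ge_of_forall_gt_exists_lt hne
    · rintro x ⟨a, b, h1, hab, _, rfl⟩
      exact SF.maxRootModulus_ge_lam m a b hm h1 hab
    · intro w hw
      obtain ⟨a, b, h1, hab, hco, hlt⟩ := SF.inf_reach m hm w hw
      exact ⟨maxRootModulus m a b, ⟨a, b, h1, hab, hco, rfl⟩, hlt⟩
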